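/- For every k ≥ 0, the characteristic polynomial p_k(x) of N_k is divisible by (x − 2)². -/
import Mathlib


open Polynomial

/-- The polynomials `p_k`, defined by `p₀(x) = (x² − 5x + 3)(x − 2)²`,
`p₁(x) = (x³ − 8x² + 17x − 5)(x − 2)²(x − 1)`, and the recursion
`p_k(x) = (x² − 4x + 2)p_{k−1}(x) − p_{k−2}(x)`. -/
noncomputable def pSeq : ℕ → Polynomial ℚ
  | 0 => (X ^ 2 - 5 * X + 3) * (X - 2) ^ 2
  | 1 => (X ^ 3 - 8 * X ^ 2 + 17 * X - 5) * (X - 2) ^ 2 * (X - 1)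
  | (k + 2) => (X ^ 2 - 4 * X + 2) * pSeq (k + 1) - pSeq k

/-- For every `k ≥ 0`, the characteristic polynomial `p_k(x)` is divisible by `(x − 2)²`. -/
theorem stmt_7 : ∀ k : ℕ, (X - 2) ^ 2 ∣ pSeq k := by
  intro k
  induction k using Nat.twoStepInduction with
  | zero => exact ⟨X ^ 2 - 5 * X + 3, by rw [pSeq]; ring⟩
  | one => exact ⟨(X ^ 3 - 8 * X ^ 2 + 17 * X - 5) * (X - 1), by rw [pSeq]; ring⟩
  | more n ih1 ih2 =>
    rw [pSeq]
    exact dvd_sub (Dvd.dvd.mul_left ih2 _) ih1
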